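/- Let F(u) = ∫_0^{1/sqrt(1+u^2)} sqrt(1-t^2) dt and let P be a real polynomial of degree at most 2n+1 and Q a real polynomial of degree at most ⌊(n-1)/2⌋ (n ≥ 2). Then M(u) = u·P(u) + (u^4+u^2)·Q(u^4+u^2)·F(u) has at most 2n + 5⌊(n-1)/2⌋ + 4 zeros (with multiplicity) in (0,∞). -/

import Mathlib

open Real intervalIntegral Set Polynomial


private lemma key_alg (c d : Polynomial ℂ) (hco : IsCoprime c d) (hd : d ≠ 0)
    (hid : d ^ 2 + (1 + X ^ 2) * (derivative c * d - c * derivative d) = 0) : False := by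
  have hCI2 : (C Complex.I : Polynomial ℂ) ^ 2 = -1 := by
    rw [← C_pow, Complex.I_sq]; simp
  have hfac : (1 + X ^ 2 : Polynomial ℂ) = (X - C Complex.I) * (X + C Complex.I) := by
    have : (X - C Complex.I) * (X + C Complex.I) = X ^ 2 - C Complex.I ^ 2 := by ring
    rw [this, hCI2]; ring
  -- d(I) = 0
  have hdi : d.eval Complex.I = 0 := by
    have h := congrArg (eval Complex.I) hid
    simp only [eval_add, eval_mul, eval_pow, eval_sub, eval_one, eval_zero, eval_X,
      Complex.I_sq] at h
    have : d.eval Complex.I ^ 2 = 0 := by linear_combination h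
    exact pow_eq_zero_iff (two_ne_zero) |>.mp this
  have hk : 0 < d.rootMultiplicity Complex.I := (rootMultiplicity_pos hd).2 hdi
  obtain ⟨k', hk'⟩ : ∃ k', d.rootMultiplicity Complex.I = k' + 1 :=
    ⟨_, (Nat.succ_pred_eq_of_pos hk).symm⟩
  obtain ⟨e, he⟩ := pow_rootMultiplicity_dvd d Complex.I
  rw [hk'] at he
  have heI : e.eval Complex.I ≠ 0 := by
    intro h0
    have hdvd : (X - C Complex.I) ∣ e := dvd_iff_isRoot.2 h0
    obtain ⟨f, hf⟩ := hdvd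
    have hdd : (X - C Complex.I) ^ (k' + 1 + 1) ∣ d := ⟨f, by rw [he, hf]; ring⟩
    have hnd := pow_rootMultiplicity_not_dvd hd Complex.I
    rw [hk'] at hnd
    exact hnd hdd
  have hcI : c.eval Complex.I ≠ 0 := by
    obtain ⟨a, b, hab⟩ := hco
    intro h0
    have := congrArg (eval Complex.I) hab
    simp [h0, hdi] at this
  set t : Polynomial ℂ := X - C Complex.I with ht
  set W : Polynomial ℂ := t * (derivative c * e - c * derivative e)
      - C ((k' : ℂ) + 1) * c * e with hW
  have hder : derivative c * d - c * derivative d = t ^ k' * W := by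
    rw [he]
    rw [derivative_mul, derivative_pow]
    simp only [derivative_X, derivative_sub, derivative_C, sub_zero, ht]
    push_cast
    ring
  have hidd : t ^ (k' + 1) * (t ^ (k' + 1) * e ^ 2 + (X + C Complex.I) * W) = 0 := by
    have h3 := hid
    rw [hder, he, hfac] at h3
    calc t ^ (k' + 1) * (t ^ (k' + 1) * e ^ 2 + (X + C Complex.I) * W)
        = (t ^ (k' + 1) * e) ^ 2 + (t * (X + C Complex.I)) * (t ^ k' * W) := by ring
      _ = 0 := h3
  have htne : t ^ (k' + 1) ≠ 0 := pow_ne_zero _ (X_sub_C_ne_zero Complex.I)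
  have h2 : t ^ (k' + 1) * e ^ 2 + (X + C Complex.I) * W = 0 := by
    rcases mul_eq_zero.1 hidd with h | h
    · exact absurd h htne
    · exact h
  have := congrArg (eval Complex.I) h2
  simp only [eval_add, eval_mul, eval_pow, eval_sub, eval_X, eval_C, eval_zero, ht, hW, eval_one] at this
  rw [sub_self] at this
  simp only [zero_pow (Nat.succ_ne_zero k'), zero_mul, mul_zero, zero_add, zero_sub] at this
  have hIne : (Complex.I + Complex.I) ≠ 0 := by
    simpa using mul_ne_zero two_ne_zero Complex.I_ne_zero
  have hkne : ((k' : ℂ) + 1) ≠ 0 := by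
    exact_mod_cast Nat.cast_add_one_ne_zero (R := ℂ) k'
  rcases mul_eq_zero.1 this with h | h
  · exact hIne h
  · have : ((k' : ℂ) + 1) * c.eval Complex.I * e.eval Complex.I = 0 := by linear_combination -h
    rcases mul_eq_zero.1 this with h' | h'
    · rcases mul_eq_zero.1 h' with h'' | h''
      · exact hkne h''
      · exact hcI h''
    · exact heI h'

private lemma no_rat_aux (c d : Polynomial ℝ) (hco : IsCoprime c d) (hd : d ≠ 0) (r : ℝ)
    (φ : ℝ → ℝ) (hφ : ∀ u ∈ Set.Ioi r, HasDerivAt φ (-(1 + u ^ 2)⁻¹) u)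
    (hdne : ∀ u ∈ Set.Ioi r, d.eval u ≠ 0)
    (heq : ∀ u ∈ Set.Ioi r, φ u = c.eval u / d.eval u) : False := by
  set poly : Polynomial ℝ :=
    d ^ 2 + (1 + X ^ 2) * (derivative c * d - c * derivative d) with hpoly
  have hpz : ∀ u ∈ Set.Ioi r, poly.eval u = 0 := by
    intro u hu
    have hd1 : HasDerivAt (fun x => c.eval x / d.eval x)
        (((derivative c).eval u * d.eval u - c.eval u * (derivative d).eval u) /
          (d.eval u) ^ 2) u := (c.hasDerivAt u).div (d.hasDerivAt u) (hdne u hu)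
    have hev : φ =ᶠ[nhds u] fun x => c.eval x / d.eval x := by
      filter_upwards [Ioi_mem_nhds hu] with x hx using heq x hx
    have hd2 : HasDerivAt φ
        (((derivative c).eval u * d.eval u - c.eval u * (derivative d).eval u) /
          (d.eval u) ^ 2) u := hd1.congr_of_eventuallyEq hev
    have huniq := (hφ u hu).unique hd2
    have h1 : (1 : ℝ) + u ^ 2 ≠ 0 := by positivity
    have h2 : d.eval u ≠ 0 := hdne u hu
    field_simp at huniq
    simp only [hpoly, eval_add, eval_mul, eval_pow, eval_sub, eval_one, eval_X]
    linarith [huniq]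
  have hpoly0 : poly = 0 := by
    apply Polynomial.eq_zero_of_infinite_isRoot
    exact Set.Infinite.mono (fun u hu => hpz u hu) (Set.Ioi_infinite r)
  -- move to ℂ
  set f := algebraMap ℝ ℂ
  have hmap : (d.map f) ^ 2 + (1 + X ^ 2) *
      (derivative (c.map f) * d.map f - c.map f * derivative (d.map f)) = 0 := by
    have := congrArg (Polynomial.map f) hpoly0
    simpa [hpoly, Polynomial.map_add, Polynomial.map_mul, Polynomial.map_pow,
      Polynomial.map_one, Polynomial.map_sub, derivative_map] using this
  have hcom : IsCoprime (c.map f) (d.map f) := by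
    have := hco.map (mapRingHom f)
    simpa using this
  have hdm : d.map f ≠ 0 := (Polynomial.map_ne_zero_iff (f := f) f.injective).2 hd
  exact key_alg _ _ hcom hdm hmap

private lemma no_rat (c d : Polynomial ℝ) (hd : d ≠ 0) (r : ℝ)
    (φ : ℝ → ℝ) (hφ : ∀ u ∈ Set.Ioi r, HasDerivAt φ (-(1 + u ^ 2)⁻¹) u)
    (hdne : ∀ u ∈ Set.Ioi r, d.eval u ≠ 0)
    (heq : ∀ u ∈ Set.Ioi r, φ u = c.eval u / d.eval u) : False := by
  set g := GCDMonoid.gcd c d with hg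
  have hgd : g ∣ d := gcd_dvd_right c d
  have hgc : g ∣ c := gcd_dvd_left c d
  have hg0 : g ≠ 0 := gcd_ne_zero_of_right hd
  have hc1 : g * (c / g) = c := EuclideanDomain.mul_div_cancel' hg0 hgc
  have hd1 : g * (d / g) = d := EuclideanDomain.mul_div_cancel' hg0 hgd
  have hco : IsCoprime (c / g) (d / g) := isCoprime_div_gcd_div_gcd hd
  have hdg0 : d / g ≠ 0 := right_div_gcd_ne_zero hd
  apply no_rat_aux (c / g) (d / g) hco hdg0 r φ hφ
  · intro u hu
    intro h0
    apply hdne u hu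
    rw [← hd1, eval_mul, h0, mul_zero]
  · intro u hu
    have hgu : g.eval u ≠ 0 := by
      intro h0
      apply hdne u hu
      rw [← hd1, eval_mul, h0, zero_mul]
    have hdu : (d / g).eval u ≠ 0 := by
      intro h0
      apply hdne u hu
      rw [← hd1, eval_mul, h0, mul_zero]
    have e1 : g * (c / g) / g = c / g := by rw [hc1]
    have e2 : g * (d / g) / g = d / g := by rw [hd1]
    rw [heq u hu, ← hc1, ← hd1, eval_mul, eval_mul]
    rw [e1, e2]
    field_simp


private lemma F_deriv (F : ℝ → ℝ)
    (hF : ∀ u, F u = ∫ t in (0:ℝ)..(1 / Real.sqrt (1 + u ^ 2)), Real.sqrt (1 - t ^ 2))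
    {u : ℝ} (hu : 0 < u) : HasDerivAt F (-(u ^ 2 / (1 + u ^ 2) ^ 2)) u := by
  have hcont : Continuous (fun t : ℝ => Real.sqrt (1 - t ^ 2)) :=
    (continuous_const.sub (continuous_pow 2)).sqrt
  set g : ℝ → ℝ := fun x => ∫ t in (0:ℝ)..x, Real.sqrt (1 - t ^ 2) with hgdef
  have hg : ∀ x : ℝ, HasDerivAt g (Real.sqrt (1 - x ^ 2)) x := by
    intro x
    exact intervalIntegral.integral_hasDerivAt_right
      (hcont.intervalIntegrable _ _)
      (hcont.stronglyMeasurable.stronglyMeasurableAtFilter)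
      hcont.continuousAt
  set s := Real.sqrt (1 + u ^ 2) with hs
  have hspos : 0 < s := Real.sqrt_pos.2 (by positivity)
  have hs2 : s ^ 2 = 1 + u ^ 2 := Real.sq_sqrt (by positivity)
  have h1 : HasDerivAt (fun u : ℝ => 1 + u ^ 2) (2 * u) u := by
    simpa using (hasDerivAt_pow 2 u).const_add 1
  have h2 : HasDerivAt (fun u : ℝ => Real.sqrt (1 + u ^ 2)) (2 * u / (2 * s)) u :=
    h1.sqrt (by positivity)
  have h3 : HasDerivAt (fun u : ℝ => 1 / Real.sqrt (1 + u ^ 2))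
      (-(2 * u / (2 * s)) / s ^ 2) u := by
    have h := h2.inv (ne_of_gt hspos)
    simp only [one_div]
    exact h.congr_deriv (by rw [← hs])
  have hcomp : HasDerivAt F
      (Real.sqrt (1 - (1 / s) ^ 2) * (-(2 * u / (2 * s)) / s ^ 2)) u := by
    have : F = fun u => g (1 / Real.sqrt (1 + u ^ 2)) := funext fun v => hF v
    rw [this]
    exact (hg (1 / s)).comp u h3
  convert hcomp using 1
  have hsq : 1 - (1 / s) ^ 2 = (u / s) ^ 2 := by
    field_simp
    nlinarith [hs2]
  have hs4 : s ^ 4 = (1 + u ^ 2) ^ 2 := by rw [← hs2]; ring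
  rw [hsq, Real.sqrt_sq (by positivity)]
  field_simp
  nlinarith [hs4]


private lemma rolle_count (Z ZD ZR : Set ℝ) (hZD : ZD.Finite) (hZR : ZR.Finite)
    (key : ∀ x y, x ∈ Z → y ∈ Z → x < y →
      (∃ s ∈ ZD, x < s ∧ s ≤ y) ∨ (∃ s ∈ ZR, x ≤ s ∧ s < y)) :
    Z.Finite ∧ Z.ncard ≤ ZD.ncard + ZR.ncard + 1 := by
  classical
  have claim : ∀ T : Finset ℝ, ↑T ⊆ Z → T.card ≤ ZD.ncard + ZR.ncard + 1 := by
    intro T hTZ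
    rcases T.eq_empty_or_nonempty with rfl | hne
    · simp
    set tmax := T.max' hne with htmax
    have htmaxT : tmax ∈ T := T.max'_mem hne
    -- "next" function
    set nt : ℝ → ℝ := fun t => sInf {s : ℝ | s ∈ (T : Set ℝ) ∧ t < s} with hnt
    have hntspec : ∀ t ∈ T.erase tmax, nt t ∈ T ∧ t < nt t := by
      intro t ht
      obtain ⟨htne, htT⟩ := Finset.mem_erase.1 ht
      have htlt : t < tmax := lt_of_le_of_ne (T.le_max' t htT) htne
      have hSne : {s : ℝ | s ∈ (T : Set ℝ) ∧ t < s}.Nonempty := ⟨tmax, htmaxT, htlt⟩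
      have hSfin : {s : ℝ | s ∈ (T : Set ℝ) ∧ t < s}.Finite :=
        T.finite_toSet.subset (fun x hx => hx.1)
      have := hSne.csInf_mem hSfin
      exact ⟨this.1, this.2⟩
    have hntle : ∀ t ∈ T, ∀ t' ∈ T, t < t' → nt t ≤ t' := by
      intro t ht t' ht' hlt
      exact csInf_le (Set.Finite.bddBelow (T.finite_toSet.subset (fun x hx => hx.1)))
        ⟨ht', hlt⟩
    set w : ℝ → ℝ ⊕ ℝ := fun t =>
      if h : ∃ s, s ∈ ZD ∧ t < s ∧ s ≤ nt t then Sum.inr h.choose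
      else if h2 : ∃ s, s ∈ ZR ∧ t ≤ s ∧ s < nt t then Sum.inl h2.choose
      else Sum.inl 0 with hw
    have hgood : ∀ t ∈ T.erase tmax,
        (∃ s, w t = Sum.inr s ∧ s ∈ ZD ∧ t < s ∧ s ≤ nt t) ∨
        (∃ s, w t = Sum.inl s ∧ s ∈ ZR ∧ t ≤ s ∧ s < nt t) := by
      intro t ht
      obtain ⟨hntT, hntlt⟩ := hntspec t ht
      have htT : t ∈ T := (Finset.mem_erase.1 ht).2
      have hk := key t (nt t) (hTZ htT) (hTZ hntT) hntlt
      by_cases h : ∃ s, s ∈ ZD ∧ t < s ∧ s ≤ nt t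
      · left
        exact ⟨h.choose, by simp only [hw, dif_pos h], h.choose_spec⟩
      · right
        have h2 : ∃ s, s ∈ ZR ∧ t ≤ s ∧ s < nt t := by
          rcases hk with ⟨s, hs1, hs2⟩ | ⟨s, hs1, hs2⟩
          · exact absurd ⟨s, hs1, hs2⟩ h
          · exact ⟨s, hs1, hs2⟩
        exact ⟨h2.choose, by simp only [hw, dif_neg h, dif_pos h2], h2.choose_spec⟩
    -- injectivity
    have hinj : ∀ t₁ ∈ T.erase tmax, ∀ t₂ ∈ T.erase tmax, t₁ < t₂ → w t₁ ≠ w t₂ := by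
      intro t₁ ht₁ t₂ ht₂ hlt heqw
      have h₁T : t₁ ∈ T := (Finset.mem_erase.1 ht₁).2
      have h₂T : t₂ ∈ T := (Finset.mem_erase.1 ht₂).2
      have hle : nt t₁ ≤ t₂ := hntle t₁ h₁T t₂ h₂T hlt
      rcases hgood t₁ ht₁ with ⟨s₁, he₁, _, hs₁a, hs₁b⟩ | ⟨s₁, he₁, _, hs₁a, hs₁b⟩ <;>
        rcases hgood t₂ ht₂ with ⟨s₂, he₂, _, hs₂a, hs₂b⟩ | ⟨s₂, he₂, _, hs₂a, hs₂b⟩ <;>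
        rw [he₁, he₂] at heqw
      · have : s₁ = s₂ := by injection heqw
        subst this
        exact absurd (lt_of_le_of_lt (hs₁b.trans hle) hs₂a) (lt_irrefl s₁)
      · cases heqw
      · cases heqw
      · have : s₁ = s₂ := by injection heqw
        subst this
        exact absurd (lt_of_lt_of_le (hs₁b.trans_le hle) hs₂a) (lt_irrefl s₁)
    have hinj' : Set.InjOn w (T.erase tmax : Set ℝ) := by
      intro t₁ ht₁ t₂ ht₂ heq
      by_contra hne'
      rcases lt_or_gt_of_ne hne' with h | h
      · exact hinj t₁ (by exact_mod_cast ht₁) t₂ (by exact_mod_cast ht₂) h heq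
      · exact hinj t₂ (by exact_mod_cast ht₂) t₁ (by exact_mod_cast ht₁) h heq.symm
    have hmem : ∀ t ∈ T.erase tmax,
        w t ∈ (hZD.toFinset.image Sum.inr ∪ hZR.toFinset.image Sum.inl : Finset (ℝ ⊕ ℝ)) := by
      intro t ht
      rcases hgood t ht with ⟨s, he, hs, _, _⟩ | ⟨s, he, hs, _, _⟩
      · exact Finset.mem_union_left _ (Finset.mem_image.2 ⟨s, hZD.mem_toFinset.2 hs, he.symm⟩)
      · exact Finset.mem_union_right _ (Finset.mem_image.2 ⟨s, hZR.mem_toFinset.2 hs, he.symm⟩)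
    have hcard : (T.erase tmax).card ≤ ZD.ncard + ZR.ncard := by
      calc (T.erase tmax).card
          ≤ (hZD.toFinset.image Sum.inr ∪ hZR.toFinset.image Sum.inl : Finset (ℝ ⊕ ℝ)).card :=
            Finset.card_le_card_of_injOn w hmem hinj'
        _ ≤ (hZD.toFinset.image Sum.inr).card + (hZR.toFinset.image Sum.inl).card :=
            Finset.card_union_le _ _
        _ ≤ hZD.toFinset.card + hZR.toFinset.card :=
            Nat.add_le_add (Finset.card_image_le) (Finset.card_image_le)
        _ = ZD.ncard + ZR.ncard := by
            rw [Set.ncard_eq_toFinset_card ZD hZD, Set.ncard_eq_toFinset_card ZR hZR]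
    have hTc : T.card = (T.erase tmax).card + 1 := by
      rw [Finset.card_erase_of_mem htmaxT]
      have := Finset.card_pos.2 hne
      omega
    omega
  have hfin : Z.Finite := by
    by_contra hinf
    rw [← Set.not_infinite, not_not] at hinf
    obtain ⟨t, htZ, htfin, htcard⟩ :=
      hinf.exists_subset_ncard_eq (ZD.ncard + ZR.ncard + 2)
    have hcl := claim htfin.toFinset (fun x hx => htZ (by simpa using hx))
    rw [← Set.ncard_eq_toFinset_card t htfin, htcard] at hcl
    omega
  refine ⟨hfin, ?_⟩
  have := claim hfin.toFinset (by simp)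
  rwa [← Set.ncard_eq_toFinset_card Z hfin] at this

section
variable (F : ℝ → ℝ) (P Q : Polynomial ℝ) (M : ℝ → ℝ)

private lemma G_deriv
    (hF : ∀ u, F u = ∫ t in (0:ℝ)..(1 / Real.sqrt (1 + u ^ 2)), Real.sqrt (1 - t ^ 2))
    (hM : ∀ u, M u = u * P.eval u + (u ^ 4 + u ^ 2) * Q.eval (u ^ 4 + u ^ 2) * F u)
    {x : ℝ} (hx : 0 < x)
    (hne : ((X ^ 4 + X ^ 2) * Q.comp (X ^ 4 + X ^ 2) : Polynomial ℝ).eval x ≠ 0) :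
    HasDerivAt (fun y => M y / ((X ^ 4 + X ^ 2) * Q.comp (X ^ 4 + X ^ 2) : Polynomial ℝ).eval y)
      (x ^ 2 * ((X * derivative P - P) * ((X ^ 2 + 1) * Q.comp (X ^ 4 + X ^ 2))
          - X * P * derivative ((X ^ 2 + 1) * Q.comp (X ^ 4 + X ^ 2))
          - X ^ 4 * (Q.comp (X ^ 4 + X ^ 2)) ^ 2).eval x
        / (((X ^ 4 + X ^ 2) * Q.comp (X ^ 4 + X ^ 2) : Polynomial ℝ).eval x) ^ 2) x := by
  set q : Polynomial ℝ := Q.comp (X ^ 4 + X ^ 2) with hqdef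
  set D : Polynomial ℝ := (X ^ 4 + X ^ 2) * q with hDdef
  set A : Polynomial ℝ := X * P with hAdef
  have hqe : ∀ y : ℝ, q.eval y = Q.eval (y ^ 4 + y ^ 2) := by
    intro y; simp [hqdef, eval_comp]
  have hDe : ∀ y : ℝ, D.eval y = (y ^ 4 + y ^ 2) * Q.eval (y ^ 4 + y ^ 2) := by
    intro y; simp [hDdef, hqe y]
  have hMD : ∀ y : ℝ, M y = y * P.eval y + D.eval y * F y := by
    intro y; rw [hM y, hDe y]
  have hA : HasDerivAt (fun y : ℝ => A.eval y) ((derivative A).eval x) x := A.hasDerivAt x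
  have hD : HasDerivAt (fun y : ℝ => D.eval y) ((derivative D).eval x) x := D.hasDerivAt x
  have h1 : HasDerivAt (fun y : ℝ => A.eval y / D.eval y + F y)
      (((derivative A).eval x * D.eval x - A.eval x * (derivative D).eval x) / (D.eval x) ^ 2
        + -(x ^ 2 / (1 + x ^ 2) ^ 2)) x :=
    (hA.div hD hne).add (F_deriv F hF hx)
  have hopen : IsOpen {y : ℝ | D.eval y ≠ 0} :=
    IsOpen.preimage D.continuous isOpen_ne
  have hev : (fun y => M y / D.eval y) =ᶠ[nhds x] (fun y => A.eval y / D.eval y + F y) := by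
    filter_upwards [hopen.mem_nhds hne] with y hy
    rw [hMD y]
    have : A.eval y = y * P.eval y := by simp [hAdef]
    rw [this]
    field_simp
  have h2 := h1.congr_of_eventuallyEq hev
  refine h2.congr_deriv ?_
  -- now the algebraic identity
  have hx1 : (1 : ℝ) + x ^ 2 ≠ 0 := by positivity
  have hAd : (derivative A).eval x = P.eval x + x * (derivative P).eval x := by
    simp [hAdef, derivative_mul]
  have hAe : A.eval x = x * P.eval x := by simp [hAdef]
  have hDd : (derivative D).eval x =
      (4 * x ^ 3 + 2 * x) * q.eval x + (x ^ 4 + x ^ 2) * (derivative q).eval x := by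
    simp [hDdef, derivative_mul, derivative_add, derivative_X_pow]
    left; ring
  have hDex : D.eval x = (x ^ 4 + x ^ 2) * q.eval x := by simp [hDdef]
  have hSd : (derivative ((X ^ 2 + 1) * q)).eval x =
      2 * x * q.eval x + (x ^ 2 + 1) * (derivative q).eval x := by
    simp [derivative_mul, derivative_add, derivative_X_pow]
    norm_num
  have hRe : ((X * derivative P - P) * ((X ^ 2 + 1) * q)
      - X * P * derivative ((X ^ 2 + 1) * q) - X ^ 4 * q ^ 2).eval x
      = (x * (derivative P).eval x - P.eval x) * ((x ^ 2 + 1) * q.eval x)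
        - x * P.eval x * (2 * x * q.eval x + (x ^ 2 + 1) * (derivative q).eval x)
        - x ^ 4 * (q.eval x) ^ 2 := by
    simp [eval_sub, eval_mul, eval_pow, eval_add, eval_one, hSd]
    norm_num
  rw [hRe, hAd, hAe, hDd, hDex]
  have hqne : q.eval x ≠ 0 := by
    intro h0
    apply hne
    rw [hDex] at *
    simp [h0]
  have hx2 : (x ^ 4 + x ^ 2) ≠ 0 := by positivity
  field_simp
  ring
end

private lemma ncard_roots_le (p : Polynomial ℝ) (hp : p ≠ 0) :
    {x : ℝ | p.eval x = 0}.ncard ≤ p.natDegree := by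
  have hset : {x : ℝ | p.eval x = 0} = ↑p.roots.toFinset := by
    ext x
    simp [Multiset.mem_toFinset, mem_roots', hp, IsRoot]
  rw [hset, Set.ncard_coe_finset]
  calc p.roots.toFinset.card ≤ Multiset.card p.roots := p.roots.toFinset_card_le
    _ ≤ p.natDegree := p.card_roots'

private lemma roots_finite (p : Polynomial ℝ) (hp : p ≠ 0) :
    {x : ℝ | p.eval x = 0}.Finite := by
  have hset : {x : ℝ | p.eval x = 0} = ↑p.roots.toFinset := by
    ext x
    simp [Multiset.mem_toFinset, mem_roots', hp, IsRoot]
  rw [hset]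
  exact p.roots.toFinset.finite_toSet

theorem stmt_16
    (F : ℝ → ℝ)
    (hF : ∀ u, F u = ∫ t in (0:ℝ)..(1 / Real.sqrt (1 + u ^ 2)),
      Real.sqrt (1 - t ^ 2))
    (n : ℕ) (hn : 2 ≤ n)
    (P Q : Polynomial ℝ)
    (hP : P.natDegree ≤ 2 * n + 1) (hQ : Q.natDegree ≤ (n - 1) / 2)
    (hPQ : ¬ (P = 0 ∧ Q = 0))
    (M : ℝ → ℝ)
    (hM : ∀ u, M u = u * P.eval u +
      (u ^ 4 + u ^ 2) * Q.eval (u ^ 4 + u ^ 2) * F u) :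
    {u : ℝ | u ∈ Set.Ioi (0:ℝ) ∧ M u = 0}.Finite ∧
    {u : ℝ | u ∈ Set.Ioi (0:ℝ) ∧ M u = 0}.ncard ≤
      2 * n + 5 * ((n - 1) / 2) + 4 := by
  classical
  set m : ℕ := (n - 1) / 2 with hm
  set Z : Set ℝ := {u : ℝ | u ∈ Set.Ioi (0:ℝ) ∧ M u = 0} with hZ
  by_cases hQ0 : Q = 0
  · -- easy case: M u = u * P.eval u
    have hPne : P ≠ 0 := fun h => hPQ ⟨h, hQ0⟩
    have hsub : Z ⊆ {x : ℝ | P.eval x = 0} := by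
      intro u hu
      obtain ⟨hu1, hu2⟩ := hu
      rw [hM u, hQ0] at hu2
      simp at hu2
      rcases hu2 with h | h
      · exact absurd h (ne_of_gt (Set.mem_Ioi.1 hu1))
      · exact h
    have hfin := (roots_finite P hPne).subset hsub
    refine ⟨hfin, ?_⟩
    calc Z.ncard ≤ {x : ℝ | P.eval x = 0}.ncard :=
          Set.ncard_le_ncard hsub (roots_finite P hPne)
      _ ≤ P.natDegree := ncard_roots_le P hPne
      _ ≤ 2 * n + 5 * m + 4 := by omega
  · -- main case
    set q : Polynomial ℝ := Q.comp (X ^ 4 + X ^ 2) with hqdef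
    set S : Polynomial ℝ := (X ^ 2 + 1) * q with hSdef
    set D : Polynomial ℝ := (X ^ 4 + X ^ 2) * q with hDdef
    set R₀ : Polynomial ℝ := (X * derivative P - P) * S - X * P * derivative S
      - X ^ 4 * q ^ 2 with hRdef
    have hX42 : (X ^ 4 + X ^ 2 : Polynomial ℝ) ≠ 0 := by
      intro h
      have := congrArg (eval 1) h
      norm_num at this
    have hq0 : q ≠ 0 := by
      rw [hqdef]
      intro h
      rcases (comp_eq_zero_iff).1 h with h1 | ⟨h1, h2⟩
      · exact hQ0 h1
      · have hc : (X ^ 4 + X ^ 2 : Polynomial ℝ).coeff 0 = 0 := by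
          simp [coeff_X_pow]
        rw [hc] at h2
        simp at h2
        exact hX42 h2
    have hD0 : D ≠ 0 := mul_ne_zero hX42 hq0
    have hqe : ∀ y : ℝ, q.eval y = Q.eval (y ^ 4 + y ^ 2) := by
      intro y; simp [hqdef, eval_comp]
    have hDe : ∀ y : ℝ, D.eval y = (y ^ 4 + y ^ 2) * Q.eval (y ^ 4 + y ^ 2) := by
      intro y; simp [hDdef, hqe y]
    have hMD : ∀ y : ℝ, M y = y * P.eval y + D.eval y * F y := by
      intro y; rw [hM y, hDe y]
    -- degree bound for R₀
    have hqdeg : q.natDegree ≤ 4 * m := by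
      calc q.natDegree ≤ Q.natDegree * (X ^ 4 + X ^ 2 : Polynomial ℝ).natDegree :=
            natDegree_comp_le
        _ ≤ m * 4 := by
            apply Nat.mul_le_mul hQ
            calc (X ^ 4 + X ^ 2 : Polynomial ℝ).natDegree
                ≤ max (X ^ 4 : Polynomial ℝ).natDegree (X ^ 2 : Polynomial ℝ).natDegree :=
                  natDegree_add_le _ _
              _ ≤ 4 := by simp [natDegree_X_pow]
        _ = 4 * m := by ring
    have hSdeg : S.natDegree ≤ 2 + 4 * m := by
      calc S.natDegree ≤ (X ^ 2 + 1 : Polynomial ℝ).natDegree + q.natDegree :=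
            natDegree_mul_le
        _ ≤ 2 + 4 * m := by
            have h1 : (X ^ 2 + 1 : Polynomial ℝ).natDegree ≤ 2 := by
              apply le_trans (natDegree_add_le _ _)
              simp [natDegree_X_pow]
            omega
    have hRdeg : R₀.natDegree ≤ 2 * n + 4 * m + 3 := by
      have hdP : (derivative P).natDegree ≤ 2 * n := by
        have := natDegree_derivative_le P
        omega
      have h1 : ((X * derivative P - P) * S).natDegree ≤ 2 * n + 4 * m + 3 := by
        calc ((X * derivative P - P) * S).natDegree
            ≤ (X * derivative P - P).natDegree + S.natDegree := natDegree_mul_le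
          _ ≤ 2 * n + 4 * m + 3 := by
              have h2 : (X * derivative P - P).natDegree ≤ 2 * n + 1 := by
                apply le_trans (natDegree_sub_le _ _)
                have h3 : (X * derivative P).natDegree ≤ 1 + 2 * n := by
                  apply le_trans natDegree_mul_le
                  simp [natDegree_X]
                  omega
                simp [max_le_iff]
                omega
              omega
      have h2 : (X * P * derivative S).natDegree ≤ 2 * n + 4 * m + 3 := by
        calc (X * P * derivative S).natDegree
            ≤ (X * P).natDegree + (derivative S).natDegree := natDegree_mul_le
          _ ≤ 2 * n + 4 * m + 3 := by
              have h3 : (X * P).natDegree ≤ 1 + (2 * n + 1) := by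
                apply le_trans natDegree_mul_le
                simp [natDegree_X]
                omega
              have h4 : (derivative S).natDegree ≤ 2 + 4 * m - 1 := by
                have := natDegree_derivative_le S
                omega
              omega
      have h3 : (X ^ 4 * q ^ 2).natDegree ≤ 2 * n + 4 * m + 3 := by
        calc (X ^ 4 * q ^ 2).natDegree
            ≤ (X ^ 4 : Polynomial ℝ).natDegree + (q ^ 2).natDegree := natDegree_mul_le
          _ ≤ 4 + 8 * m := by
              have h4 : (q ^ 2).natDegree ≤ 2 * q.natDegree := natDegree_pow_le
              simp [natDegree_X_pow]
              omega
          _ ≤ 2 * n + 4 * m + 3 := by omega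
      calc R₀.natDegree ≤ max ((X * derivative P - P) * S - X * P * derivative S).natDegree
            (X ^ 4 * q ^ 2).natDegree := natDegree_sub_le _ _
        _ ≤ 2 * n + 4 * m + 3 := by
            have := natDegree_sub_le ((X * derivative P - P) * S) (X * P * derivative S)
            simp [max_le_iff]
            constructor
            · omega
            · exact h3
    -- analytic facts
    have hFd : ∀ {u : ℝ}, 0 < u → HasDerivAt F (-(u ^ 2 / (1 + u ^ 2) ^ 2)) u :=
      fun {u} hu => F_deriv F hF hu
    have hMcont : ∀ z : ℝ, 0 < z → ContinuousAt M z := by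
      intro z hz
      have hMeq : M = fun u => u * P.eval u + D.eval u * F u := funext hMD
      rw [hMeq]
      exact (continuousAt_id.mul P.continuous.continuousAt).add
        (D.continuous.continuousAt.mul (hFd hz).continuousAt)
    have hGd : ∀ x : ℝ, 0 < x → D.eval x ≠ 0 →
        HasDerivAt (fun y => M y / D.eval y) (x ^ 2 * R₀.eval x / (D.eval x) ^ 2) x := by
      intro x hx hne
      exact G_deriv F P Q M hF hM hx hne
    have hDRoot : ∀ t : ℝ, 0 < t → D.eval t = 0 → M t = 0 → R₀.eval t = 0 := by
      intro t ht hDt hMt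
      have ht2 : (0:ℝ) < t ^ 4 + t ^ 2 := by positivity
      have hqt : q.eval t = 0 := by
        rw [hqe t]
        have h0 := hDe t ▸ hDt
        rcases mul_eq_zero.1 h0 with h | h
        · exact absurd h (ne_of_gt ht2)
        · exact h
      have hPt : P.eval t = 0 := by
        have h0 := hMD t
        rw [hMt] at h0
        have hDt' : D.eval t = 0 := hDt
        rw [hDt'] at h0
        simp at h0
        rcases h0 with h | h
        · exact absurd h (ne_of_gt ht)
        · exact h
      have hSt : S.eval t = 0 := by simp [hSdef, hqt]
      simp [hRdef, eval_sub, eval_mul, eval_pow, hSt, hPt, hqt]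
    -- R₀ is nonzero
    have hRne : R₀ ≠ 0 := by
      intro hR0
      obtain ⟨b, hb⟩ := (roots_finite D hD0).bddAbove
      set r : ℝ := max b 1 with hr
      have hrpos : (0:ℝ) < r := lt_of_lt_of_le one_pos (le_max_right b 1)
      have hrne : ∀ u : ℝ, r < u → D.eval u ≠ 0 := by
        intro u hu h0
        have : u ≤ b := hb h0
        have : u ≤ r := le_trans this (le_max_left b 1)
        linarith
      set G : ℝ → ℝ := fun y => M y / D.eval y with hG
      have hG0 : ∀ x : ℝ, r < x → HasDerivAt G 0 x := by
        intro x hx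
        have hx0 : 0 < x := lt_trans hrpos hx
        have := hGd x hx0 (hrne x hx)
        have hz : R₀.eval x = 0 := by rw [hR0]; simp
        rw [hz] at this
        simpa using this
      set x₀ : ℝ := r + 1 with hx₀
      have hx₀r : r < x₀ := by rw [hx₀]; linarith
      have hconst : ∀ u : ℝ, x₀ < u → G u = G x₀ := by
        intro u hu
        have hc : ∀ z ∈ Set.Icc x₀ u, G z = G x₀ := by
          apply constant_of_has_deriv_right_zero
          · intro z hz
            exact (hG0 z (lt_of_lt_of_le hx₀r hz.1)).continuousAt.continuousWithinAt
          · intro z hz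
            exact (hG0 z (lt_of_lt_of_le hx₀r hz.1)).hasDerivWithinAt
        exact hc u ⟨le_of_lt hu, le_refl u⟩
      set c : ℝ := G x₀ with hc
      set cP : Polynomial ℝ := C (2 * c) * (D * (X ^ 2 + 1)) - (2 * X * P) * (X ^ 2 + 1)
        - X * D with hcP
      set dP : Polynomial ℝ := D * (X ^ 2 + 1) with hdP
      have hX21 : (X ^ 2 + 1 : Polynomial ℝ) ≠ 0 := by
        intro h
        have := congrArg (eval 0) h
        norm_num at this
      have hdPne : dP ≠ 0 := mul_ne_zero hD0 hX21
      set φ : ℝ → ℝ := fun u => 2 * F u - u / (1 + u ^ 2) with hφ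
      apply no_rat cP dP hdPne x₀ φ
      · intro u hu
        have hu0 : 0 < u := lt_trans (lt_trans hrpos hx₀r) hu
        have h1 : (1:ℝ) + u ^ 2 ≠ 0 := by positivity
        have hd1 : HasDerivAt (fun u : ℝ => u / (1 + u ^ 2))
            ((1 * (1 + u ^ 2) - u * (2 * u)) / (1 + u ^ 2) ^ 2) u := by
          have hden : HasDerivAt (fun u : ℝ => 1 + u ^ 2) (2 * u) u := by
            simpa using (hasDerivAt_pow 2 u).const_add 1
          exact (hasDerivAt_id u).div hden h1
        have hd2 : HasDerivAt φ
            (2 * -(u ^ 2 / (1 + u ^ 2) ^ 2) - (1 * (1 + u ^ 2) - u * (2 * u)) / (1 + u ^ 2) ^ 2)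
            u := ((hFd hu0).const_mul 2).sub hd1
        convert hd2 using 1
        field_simp
        ring
      · intro u hu
        have hune : D.eval u ≠ 0 := hrne u (lt_trans hx₀r hu)
        have h1 : (1:ℝ) + u ^ 2 ≠ 0 := by positivity
        simp only [hdP, eval_mul, eval_add, eval_pow, eval_one, eval_X]
        intro h0
        rcases mul_eq_zero.1 h0 with h | h
        · exact hune h
        · nlinarith [sq_nonneg u]
      · intro u hu
        have hune : D.eval u ≠ 0 := hrne u (lt_trans hx₀r hu)
        have h1 : (1:ℝ) + u ^ 2 ≠ 0 := by positivity
        have hGu : G u = c := hconst u hu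
        have hFu : F u = c - u * P.eval u / D.eval u := by
          have h2 : M u = c * D.eval u := by
            rw [← hGu, hG]
            field_simp
          have h3 := hMD u
          rw [h2] at h3
          field_simp at h3 ⊢
          linarith [h3]
        rw [hφ]
        simp only [hcP, hdP, eval_sub, eval_mul, eval_add, eval_pow, eval_one, eval_X, eval_C, eval_ofNat]
        rw [hFu]
        field_simp
        ring
    -- the zero sets
    set ZD : Set ℝ := {u : ℝ | 0 < u ∧ D.eval u = 0} with hZD
    set ZR : Set ℝ := {u : ℝ | 0 < u ∧ R₀.eval u = 0} with hZR
    have hZDfin : ZD.Finite := (roots_finite D hD0).subset (fun u hu => hu.2)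
    have hZRfin : ZR.Finite := (roots_finite R₀ hRne).subset (fun u hu => hu.2)
    have hZDcard : ZD.ncard ≤ m := by
      have hinj : Set.InjOn (fun u : ℝ => u ^ 4 + u ^ 2) ZD := by
        intro a ha b hb hab
        simp only at hab
        by_contra hne
        have ha0 : 0 < a := ha.1
        have hb0 : 0 < b := hb.1
        rcases lt_or_gt_of_ne hne with h | h
        · have h4 : a ^ 4 < b ^ 4 := pow_lt_pow_left₀ h (le_of_lt ha0) (by norm_num)
          have h2 : a ^ 2 < b ^ 2 := pow_lt_pow_left₀ h (le_of_lt ha0) (by norm_num)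
          linarith
        · have h4 : b ^ 4 < a ^ 4 := pow_lt_pow_left₀ h (le_of_lt hb0) (by norm_num)
          have h2 : b ^ 2 < a ^ 2 := pow_lt_pow_left₀ h (le_of_lt hb0) (by norm_num)
          linarith
      have himg : (fun u : ℝ => u ^ 4 + u ^ 2) '' ZD ⊆ {x : ℝ | Q.eval x = 0} := by
        rintro _ ⟨u, hu, rfl⟩
        have hu0 : 0 < u := hu.1
        have h2 : (0:ℝ) < u ^ 4 + u ^ 2 := by nlinarith
        have h0 := hDe u ▸ hu.2
        rcases mul_eq_zero.1 h0 with h | h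
        · exact absurd h (ne_of_gt h2)
        · exact h
      calc ZD.ncard = ((fun u : ℝ => u ^ 4 + u ^ 2) '' ZD).ncard :=
            (Set.ncard_image_of_injOn hinj).symm
        _ ≤ {x : ℝ | Q.eval x = 0}.ncard :=
            Set.ncard_le_ncard himg (roots_finite Q hQ0)
        _ ≤ Q.natDegree := ncard_roots_le Q hQ0
        _ ≤ m := hQ
    have hZRcard : ZR.ncard ≤ 2 * n + 4 * m + 3 := by
      calc ZR.ncard ≤ {x : ℝ | R₀.eval x = 0}.ncard :=
            Set.ncard_le_ncard (fun u hu => hu.2) (roots_finite R₀ hRne)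
        _ ≤ R₀.natDegree := ncard_roots_le R₀ hRne
        _ ≤ 2 * n + 4 * m + 3 := hRdeg
    -- key step for the counting lemma
    have key : ∀ x y : ℝ, x ∈ Z → y ∈ Z → x < y →
        (∃ s ∈ ZD, x < s ∧ s ≤ y) ∨ (∃ s ∈ ZR, x ≤ s ∧ s < y) := by
      intro x y hxZ hyZ hxy
      have hx0 : 0 < x := Set.mem_Ioi.1 hxZ.1
      by_cases hex : ∃ s, s ∈ ZD ∧ x < s ∧ s ≤ y
      · left
        obtain ⟨s, h1, h2, h3⟩ := hex
        exact ⟨s, h1, h2, h3⟩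
      · have hno : ∀ s : ℝ, x < s → s ≤ y → D.eval s ≠ 0 := by
          intro s h1 h2 h0
          exact hex ⟨s, ⟨lt_trans hx0 h1, h0⟩, h1, h2⟩
        by_cases hDx : D.eval x = 0
        · right
          exact ⟨x, ⟨hx0, hDRoot x hx0 hDx hxZ.2⟩, le_refl x, hxy⟩
        · have hcont : ContinuousOn (fun u => M u / D.eval u) (Set.Icc x y) := by
            intro z hz
            have hz0 : 0 < z := lt_of_lt_of_le hx0 hz.1
            have hDz : D.eval z ≠ 0 := by
              rcases eq_or_lt_of_le hz.1 with h | h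
              · rw [← h]; exact hDx
              · exact hno z h hz.2
            exact ((hMcont z hz0).div D.continuous.continuousAt hDz).continuousWithinAt
          have hGxy : (fun u => M u / D.eval u) x = (fun u => M u / D.eval u) y := by
            simp only [hxZ.2, hyZ.2, zero_div]
          obtain ⟨ξ, hξmem, hξ⟩ := exists_hasDerivAt_eq_zero hxy hcont hGxy
            (fun z hz => hGd z (lt_trans hx0 hz.1) (hno z hz.1 (le_of_lt hz.2)))
          right
          have hξ0 : 0 < ξ := lt_trans hx0 hξmem.1
          have hDξ : D.eval ξ ≠ 0 := hno ξ hξmem.1 (le_of_lt hξmem.2)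
          have hRξ : R₀.eval ξ = 0 := by
            have h0 : ξ ^ 2 * R₀.eval ξ = 0 := by
              rcases div_eq_zero_iff.1 hξ with h | h
              · exact h
              · exact absurd (pow_eq_zero_iff two_ne_zero |>.1 h) hDξ
            rcases mul_eq_zero.1 h0 with h | h
            · exact absurd h (pow_ne_zero 2 (ne_of_gt hξ0))
            · exact h
          exact ⟨ξ, ⟨hξ0, hRξ⟩, le_of_lt hξmem.1, hξmem.2⟩
    obtain ⟨hfin, hcard⟩ := rolle_count Z ZD ZR hZDfin hZRfin key
    refine ⟨hfin, ?_⟩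
    calc Z.ncard ≤ ZD.ncard + ZR.ncard + 1 := hcard
      _ ≤ m + (2 * n + 4 * m + 3) + 1 := by omega
      _ ≤ 2 * n + 5 * m + 4 := by omega
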